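/- arXiv:1907.03321 — 6 statements merged into one kernel-verified Lean document; each statement's English description precedes it below -/
import Mathlib

section
/- Let a : [0,1] → ℝ be continuous on [0,1], continuously differentiable on (0,1], with a(x) > 0 for all x ∈ (0,1], a(0) = 0, and suppose there exists K ≥ 0 such that x·(deriv a)(x) ≤ K·a(x) for all x ∈ (0,1]. Then for every x ∈ (0,1] one has a(x) ≥ a(1)·x^K, and consequently 1/a(x) ≤ 1/(a(1)·x^K). -/
open Set

/-- Under the degeneracy condition `x * a'(x) ≤ K * a(x)` on `(0,1]` with `K ≥ 0`,
one has `a x ≥ a 1 * x ^ K` on `(0,1]`, hence `1 / a x ≤ 1 / (a 1 * x ^ K)`. -/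
theorem a_lower_bound
    (a : ℝ → ℝ) (K : ℝ)
    (ha_cont : ContinuousOn a (Icc 0 1))
    (ha_diff : ∀ x ∈ Ioc (0:ℝ) 1, DifferentiableAt ℝ a x)
    (ha_deriv_cont : ContinuousOn (deriv a) (Ioc 0 1))
    (ha_pos : ∀ x ∈ Ioc (0:ℝ) 1, 0 < a x)
    (ha0 : a 0 = 0)
    (hK : 0 ≤ K)
    (hdeg : ∀ x ∈ Ioc (0:ℝ) 1, x * deriv a x ≤ K * a x) :
    ∀ x ∈ Ioc (0:ℝ) 1, a 1 * x ^ K ≤ a x ∧ 1 / a x ≤ 1 / (a 1 * x ^ K) := by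
  set g : ℝ → ℝ := fun x => a x * x ^ (-K) with hg
  -- derivative of g on (0,1]
  have hgderiv : ∀ x ∈ Ioc (0:ℝ) 1,
      HasDerivAt g (deriv a x * x ^ (-K) + a x * (-K * x ^ (-K - 1))) x := by
    intro x hx
    have hxpos : 0 < x := hx.1
    have h1 : HasDerivAt a (deriv a x) x := (ha_diff x hx).hasDerivAt
    have h2 : HasDerivAt (fun y : ℝ => y ^ (-K)) (-K * x ^ (-K - 1)) x :=
      Real.hasDerivAt_rpow_const (Or.inl hxpos.ne')
    exact h1.mul h2
  have hgderiv' : ∀ x ∈ Ioc (0:ℝ) 1, deriv g x ≤ 0 := by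
    intro x hx
    have hxpos : 0 < x := hx.1
    rw [(hgderiv x hx).deriv]
    have key : deriv a x * x ^ (-K) + a x * (-K * x ^ (-K - 1))
        = x ^ (-K - 1) * (x * deriv a x - K * a x) := by
      have hx1 : x ^ (-K) = x ^ (-K - 1) * x := by
        rw [show (-K) = (-K - 1) + 1 by ring, Real.rpow_add hxpos, Real.rpow_one]; norm_num
      rw [hx1]; ring
    rw [key]
    have h1 : (0:ℝ) ≤ x ^ (-K - 1) := (Real.rpow_pos_of_pos hxpos _).le
    have h2 : x * deriv a x - K * a x ≤ 0 := sub_nonpos.mpr (hdeg x hx)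
    exact mul_nonpos_of_nonneg_of_nonpos h1 h2
  have hgcont : ContinuousOn g (Ioc (0:ℝ) 1) := by
    apply ContinuousOn.mul (ha_cont.mono (Ioc_subset_Icc_self))
    intro x hx
    exact (Real.continuousAt_rpow_const x (-K) (Or.inl hx.1.ne')).continuousWithinAt
  have hanti : AntitoneOn g (Ioc (0:ℝ) 1) := by
    apply antitoneOn_of_deriv_nonpos (convex_Ioc 0 1) hgcont
    · intro x hx
      rw [interior_Ioc] at hx
      exact (hgderiv x ⟨hx.1, hx.2.le⟩).differentiableAt.differentiableWithinAt
    · intro x hx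
      rw [interior_Ioc] at hx
      exact hgderiv' x ⟨hx.1, hx.2.le⟩
  intro x hx
  have hxpos : 0 < x := hx.1
  have h1mem : (1:ℝ) ∈ Ioc (0:ℝ) 1 := ⟨one_pos, le_refl 1⟩
  have hgle : g 1 ≤ g x := hanti hx h1mem hx.2
  have hg1 : g 1 = a 1 := by
    simp [hg, Real.one_rpow]
  have hxK : (0:ℝ) < x ^ K := Real.rpow_pos_of_pos hxpos K
  have hmain : a 1 * x ^ K ≤ a x := by
    have := mul_le_mul_of_nonneg_right hgle hxK.le
    rw [hg1] at this
    calc a 1 * x ^ K ≤ a x * x ^ (-K) * x ^ K := this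
      _ = a x := by
          rw [mul_assoc, ← Real.rpow_add hxpos]
          simp
  refine ⟨hmain, ?_⟩
  have ha1 : 0 < a 1 := ha_pos 1 h1mem
  exact one_div_le_one_div_of_le (mul_pos ha1 hxK) hmain
end

section
/- Let a : [0,1] → ℝ be continuous on [0,1], continuously differentiable on (0,1], with a(x) > 0 for all x ∈ (0,1], a(0) = 0, and suppose there exists K with 0 ≤ K < 1 such that x·(deriv a)(x) ≤ K·a(x) for all x ∈ (0,1]. Then the function x ↦ 1/a(x) is Lebesgue integrable on (0,1), and ∫₀¹ 1/a(x) dx ≤ 1/(a(1)·(1−K)). -/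
open Set MeasureTheory

/-- (WDP) If `x * a'(x) ≤ K * a(x)` on `(0,1]` with `0 ≤ K < 1`, then `1 / a`
is Lebesgue integrable on `(0,1)` and `∫₀¹ 1/a ≤ 1/(a 1 * (1 - K))`. -/
theorem one_div_a_integrable
    (a : ℝ → ℝ) (K : ℝ)
    (ha_cont : ContinuousOn a (Icc 0 1))
    (ha_diff : ∀ x ∈ Ioc (0:ℝ) 1, DifferentiableAt ℝ a x)
    (ha_deriv_cont : ContinuousOn (deriv a) (Ioc 0 1))
    (ha_pos : ∀ x ∈ Ioc (0:ℝ) 1, 0 < a x)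
    (ha0 : a 0 = 0)
    (hK0 : 0 ≤ K) (hK1 : K < 1)
    (hdeg : ∀ x ∈ Ioc (0:ℝ) 1, x * deriv a x ≤ K * a x) :
    IntegrableOn (fun x => 1 / a x) (Ioo 0 1) volume ∧
      ∫ x in Ioo (0:ℝ) 1, 1 / a x ≤ 1 / (a 1 * (1 - K)) := by
  have ha1 : 0 < a 1 := ha_pos 1 ⟨one_pos, le_refl 1⟩
  -- the auxiliary function f y = a y * y^(-K) and its derivative
  set f : ℝ → ℝ := fun y => a y * y ^ (-K) with hf_def
  have hfderiv : ∀ y ∈ Ioc (0:ℝ) 1,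
      HasDerivAt f (deriv a y * y ^ (-K) + a y * (-K * y ^ (-K - 1))) y := by
    intro y hy
    have h1 : HasDerivAt a (deriv a y) y := (ha_diff y hy).hasDerivAt
    have h2 : HasDerivAt (fun z : ℝ => z ^ (-K)) (-K * y ^ (-K - 1)) y :=
      Real.hasDerivAt_rpow_const (Or.inl (ne_of_gt hy.1))
    exact h1.mul h2
  have hfderiv_nonpos : ∀ y ∈ Ioc (0:ℝ) 1, deriv f y ≤ 0 := by
    intro y hy
    rw [(hfderiv y hy).deriv]
    have hy0 : (0:ℝ) < y := hy.1
    have hyp : (0:ℝ) < y ^ (-K - 1) := Real.rpow_pos_of_pos hy0 _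
    have hsplit : y ^ (-K) = y ^ (-K - 1) * y := by
      rw [← Real.rpow_add_one (ne_of_gt hy0)]; ring_nf
    have : deriv a y * y ^ (-K) + a y * (-K * y ^ (-K - 1))
        = y ^ (-K - 1) * (y * deriv a y - K * a y) := by
      rw [hsplit]; ring
    rw [this]
    have := hdeg y hy
    nlinarith
  -- key pointwise lower bound : a 1 * x^K ≤ a x on (0,1]
  have key : ∀ x ∈ Ioc (0:ℝ) 1, a 1 * x ^ K ≤ a x := by
    intro x hx
    have hsub : Icc x 1 ⊆ Ioc (0:ℝ) 1 := fun z hz => ⟨lt_of_lt_of_le hx.1 hz.1, hz.2⟩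
    have hsub' : Icc x 1 ⊆ Icc (0:ℝ) 1 := fun z hz => ⟨le_of_lt (lt_of_lt_of_le hx.1 hz.1), hz.2⟩
    have hcontf : ContinuousOn f (Icc x 1) := by
      apply ContinuousOn.mul (ha_cont.mono hsub')
      apply ContinuousOn.rpow_const continuousOn_id
      intro z hz
      exact Or.inl (ne_of_gt (hsub hz).1)
    have hanti : AntitoneOn f (Icc x 1) := by
      apply antitoneOn_of_deriv_nonpos (convex_Icc x 1) hcontf
      · intro z hz
        have hz' : z ∈ Ioc (0:ℝ) 1 := hsub (interior_subset hz)
        exact (hfderiv z hz').differentiableAt.differentiableWithinAt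
      · intro z hz
        exact hfderiv_nonpos z (hsub (interior_subset hz))
    have hx1 : x ∈ Icc x 1 := ⟨le_refl x, hx.2⟩
    have h11 : (1:ℝ) ∈ Icc x 1 := ⟨hx.2, le_refl 1⟩
    have hle : f 1 ≤ f x := hanti hx1 h11 hx.2
    have hone : (1:ℝ) ^ (-K) = 1 := Real.one_rpow _
    simp only [hf_def, hone, mul_one] at hle
    have hxK : (0:ℝ) < x ^ K := Real.rpow_pos_of_pos hx.1 _
    have := mul_le_mul_of_nonneg_right hle (le_of_lt hxK)
    calc a 1 * x ^ K ≤ a x * x ^ (-K) * x ^ K := this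
      _ = a x := by
          rw [mul_assoc, ← Real.rpow_add hx.1]
          simp
  -- the dominating function
  have hg_int : IntegrableOn (fun x : ℝ => x ^ (-K) / a 1) (Ioo 0 1) volume := by
    have h1 : IntervalIntegrable (fun x : ℝ => x ^ (-K)) volume 0 1 :=
      intervalIntegral.intervalIntegrable_rpow' (by linarith)
    have h2 : IntegrableOn (fun x : ℝ => x ^ (-K)) (Ioc 0 1) volume := by
      rwa [intervalIntegrable_iff_integrableOn_Ioc_of_le zero_le_one] at h1
    exact (h2.mono_set Ioo_subset_Ioc_self).div_const _
  have hbound : ∀ x ∈ Ioo (0:ℝ) 1, 1 / a x ≤ x ^ (-K) / a 1 := by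
    intro x hx
    have hx' : x ∈ Ioc (0:ℝ) 1 := ⟨hx.1, le_of_lt hx.2⟩
    have hax : 0 < a x := ha_pos x hx'
    have hxK : (0:ℝ) < x ^ K := Real.rpow_pos_of_pos hx.1 _
    have hk := key x hx'
    rw [div_le_div_iff₀ hax ha1]
    calc 1 * a 1 = a 1 := one_mul _
      _ = a 1 * x ^ K * x ^ (-K) := by
          rw [mul_assoc, ← Real.rpow_add hx.1]; simp
      _ ≤ a x * x ^ (-K) :=
          mul_le_mul_of_nonneg_right hk (le_of_lt (Real.rpow_pos_of_pos hx.1 _))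
      _ = x ^ (-K) * a x := mul_comm _ _
  have hmeas : AEStronglyMeasurable (fun x => 1 / a x) (volume.restrict (Ioo 0 1)) := by
    apply ContinuousOn.aestronglyMeasurable _ measurableSet_Ioo
    apply ContinuousOn.div continuousOn_const
    · exact ha_cont.mono (fun z hz => ⟨le_of_lt hz.1, le_of_lt hz.2⟩)
    · intro z hz
      exact ne_of_gt (ha_pos z ⟨hz.1, le_of_lt hz.2⟩)
  have hint : IntegrableOn (fun x => 1 / a x) (Ioo 0 1) volume := by
    apply Integrable.mono hg_int hmeas
    filter_upwards [ae_restrict_mem measurableSet_Ioo] with x hx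
    have hax : 0 < a x := ha_pos x ⟨hx.1, le_of_lt hx.2⟩
    rw [Real.norm_eq_abs, Real.norm_eq_abs, abs_of_pos (div_pos one_pos hax),
      abs_of_pos (div_pos (Real.rpow_pos_of_pos hx.1 _) ha1)]
    exact hbound x hx
  refine ⟨hint, ?_⟩
  have hmono : ∫ x in Ioo (0:ℝ) 1, 1 / a x ≤ ∫ x in Ioo (0:ℝ) 1, x ^ (-K) / a 1 :=
    setIntegral_mono_on hint hg_int measurableSet_Ioo hbound
  have hval : ∫ x in Ioo (0:ℝ) 1, x ^ (-K) / a 1 = 1 / (a 1 * (1 - K)) := by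
    have h1 : ∫ x in Ioo (0:ℝ) 1, x ^ (-K) / a 1
        = (∫ x in Ioo (0:ℝ) 1, x ^ (-K)) / a 1 := integral_div _ _
    have h2 : ∫ x in Ioo (0:ℝ) 1, x ^ (-K) = ∫ x in (0:ℝ)..1, x ^ (-K) := by
      rw [intervalIntegral.integral_of_le zero_le_one, integral_Ioc_eq_integral_Ioo]
    have h3 : ∫ x in (0:ℝ)..1, x ^ (-K) = ((1:ℝ) ^ (-K + 1) - (0:ℝ) ^ (-K + 1)) / (-K + 1) :=
      integral_rpow (Or.inl (by linarith))
    have h4 : (0:ℝ) ^ (-K + 1) = 0 := Real.zero_rpow (by linarith)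
    rw [h1, h2, h3, h4, Real.one_rpow]
    rw [div_div]
    ring_nf
  linarith
end

section
/- Let a : [0,1] → ℝ be continuous on [0,1], continuously differentiable on (0,1], with a(x) > 0 for all x ∈ (0,1], a(0) = 0, and suppose there exists K with 0 ≤ K < 2 such that x·(deriv a)(x) ≤ K·a(x) for all x ∈ (0,1]. Then the function x ↦ 1/√(a(x)) is Lebesgue integrable on (0,1), and ∫₀¹ 1/√(a(x)) dx ≤ 2/(√(a(1))·(2−K)). -/
open Set MeasureTheory

/-- Key lower bound: `a 1 * x ^ K ≤ a x` on `(0,1]`. -/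
lemma aux_lower_bound (a : ℝ → ℝ) (K : ℝ)
    (ha_cont : ContinuousOn a (Icc 0 1))
    (ha_diff : ∀ x ∈ Ioc (0:ℝ) 1, DifferentiableAt ℝ a x)
    (hdeg : ∀ x ∈ Ioc (0:ℝ) 1, x * deriv a x ≤ K * a x) :
    ∀ x ∈ Ioc (0:ℝ) 1, a 1 * x ^ K ≤ a x := by
  set h : ℝ → ℝ := fun x => a x * x ^ (-K) with hh
  have hderiv : ∀ x ∈ Ioo (0:ℝ) 1,
      HasDerivAt h (deriv a x * x ^ (-K) + a x * (-K * x ^ (-K - 1))) x := by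
    intro x hx
    have hx0 : x ≠ 0 := ne_of_gt hx.1
    have h1 : HasDerivAt a (deriv a x) x := (ha_diff x ⟨hx.1, hx.2.le⟩).hasDerivAt
    have h2 : HasDerivAt (fun y : ℝ => y ^ (-K)) (-K * x ^ (-K - 1)) x :=
      Real.hasDerivAt_rpow_const (Or.inl hx0)
    simpa [hh, mul_comm] using h1.fun_mul h2
  have hanti : AntitoneOn h (Ioc 0 1) := by
    apply antitoneOn_of_deriv_nonpos (convex_Ioc 0 1)
    · apply ContinuousOn.mul (ha_cont.mono Ioc_subset_Icc_self)
      intro x hx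
      exact (Real.continuousAt_rpow_const x (-K) (Or.inl (ne_of_gt hx.1))).continuousWithinAt
    · rw [interior_Ioc]
      intro x hx
      exact (hderiv x hx).differentiableAt.differentiableWithinAt
    · rw [interior_Ioc]
      intro x hx
      rw [(hderiv x hx).deriv]
      have hxk : x ^ (-K) = x * x ^ (-K - 1) := by
        have h := Real.rpow_add hx.1 1 (-K - 1)
        rw [Real.rpow_one] at h
        have he : (1 : ℝ) + (-K - 1) = -K := by ring
        rw [he] at h
        exact h
      have hp : (0:ℝ) < x ^ (-K - 1) := Real.rpow_pos_of_pos hx.1 _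
      have hd := hdeg x ⟨hx.1, hx.2.le⟩
      have heq : deriv a x * (x * x ^ (-K - 1)) + a x * (-K * x ^ (-K - 1))
          = (x * deriv a x - K * a x) * x ^ (-K - 1) := by ring
      rw [hxk, heq]
      exact mul_nonpos_of_nonpos_of_nonneg (sub_nonpos.2 hd) hp.le
  intro x hx
  have h1m : (1:ℝ) ∈ Ioc (0:ℝ) 1 := ⟨one_pos, le_refl 1⟩
  have hle : h 1 ≤ h x := hanti hx h1m hx.2
  have hh1 : h 1 = a 1 := by simp [hh]
  have hxK : (0:ℝ) < x ^ K := Real.rpow_pos_of_pos hx.1 K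
  have : a 1 * x ^ K ≤ (a x * x ^ (-K)) * x ^ K := by
    rw [← hh1]
    exact mul_le_mul_of_nonneg_right hle hxK.le
  calc a 1 * x ^ K ≤ (a x * x ^ (-K)) * x ^ K := this
    _ = a x := by
        rw [mul_assoc, ← Real.rpow_add hx.1]
        simp

/-- If `x * a'(x) ≤ K * a(x)` on `(0,1]` with `0 ≤ K < 2`, then `1 / √(a x)`
is Lebesgue integrable on `(0,1)` and `∫₀¹ 1/√(a x) dx ≤ 2/(√(a 1) * (2 - K))`. -/
theorem one_div_sqrt_a_integrable
    (a : ℝ → ℝ) (K : ℝ)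
    (ha_cont : ContinuousOn a (Icc 0 1))
    (ha_diff : ∀ x ∈ Ioc (0:ℝ) 1, DifferentiableAt ℝ a x)
    (ha_deriv_cont : ContinuousOn (deriv a) (Ioc 0 1))
    (ha_pos : ∀ x ∈ Ioc (0:ℝ) 1, 0 < a x)
    (ha0 : a 0 = 0)
    (hK0 : 0 ≤ K) (hK2 : K < 2)
    (hdeg : ∀ x ∈ Ioc (0:ℝ) 1, x * deriv a x ≤ K * a x) :
    IntegrableOn (fun x => 1 / Real.sqrt (a x)) (Ioo 0 1) volume ∧
      ∫ x in Ioo (0:ℝ) 1, 1 / Real.sqrt (a x) ≤ 2 / (Real.sqrt (a 1) * (2 - K)) := by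
  have hlow := aux_lower_bound a K ha_cont ha_diff hdeg
  have ha1 : 0 < a 1 := ha_pos 1 ⟨one_pos, le_refl 1⟩
  have hs1 : 0 < Real.sqrt (a 1) := Real.sqrt_pos.2 ha1
  set g : ℝ → ℝ := fun x => (Real.sqrt (a 1))⁻¹ * x ^ (-(K/2)) with hg
  -- pointwise bound
  have hbound : ∀ x ∈ Ioo (0:ℝ) 1, 1 / Real.sqrt (a x) ≤ g x := by
    intro x hx
    have hx' : x ∈ Ioc (0:ℝ) 1 := ⟨hx.1, hx.2.le⟩
    have hxK : (0:ℝ) < x ^ K := Real.rpow_pos_of_pos hx.1 K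
    have hab : 0 < a 1 * x ^ K := mul_pos ha1 hxK
    have hsle : Real.sqrt (a 1 * x ^ K) ≤ Real.sqrt (a x) :=
      Real.sqrt_le_sqrt (hlow x hx')
    have hspos : 0 < Real.sqrt (a 1 * x ^ K) := Real.sqrt_pos.2 hab
    have h1 : 1 / Real.sqrt (a x) ≤ 1 / Real.sqrt (a 1 * x ^ K) :=
      one_div_le_one_div_of_le hspos hsle
    have hsq : Real.sqrt (a 1 * x ^ K) = Real.sqrt (a 1) * x ^ (K/2) := by
      rw [Real.sqrt_mul ha1.le]
      congr 1
      rw [Real.sqrt_eq_rpow, ← Real.rpow_mul hx.1.le]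
      ring_nf
    rw [hsq] at h1
    calc 1 / Real.sqrt (a x) ≤ 1 / (Real.sqrt (a 1) * x ^ (K/2)) := h1
      _ = g x := by
          rw [hg]
          rw [one_div, mul_inv, ← Real.rpow_neg hx.1.le]
  -- integrability of the dominating function
  have hg_int : IntegrableOn g (Ioo (0:ℝ) 1) volume := by
    have hr : (-1:ℝ) < -(K/2) := by linarith
    have h1 : IntervalIntegrable (fun x : ℝ => x ^ (-(K/2))) volume 0 1 :=
      intervalIntegral.intervalIntegrable_rpow' hr
    have h2 : IntegrableOn (fun x : ℝ => x ^ (-(K/2))) (Ioc 0 1) volume :=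
      (intervalIntegrable_iff_integrableOn_Ioc_of_le zero_le_one).1 h1
    exact (h2.mono_set Ioo_subset_Ioc_self).const_mul _
  -- measurability of f
  have hf_cont : ContinuousOn (fun x => 1 / Real.sqrt (a x)) (Ioo (0:ℝ) 1) := by
    apply ContinuousOn.div continuousOn_const
    · exact Real.continuous_sqrt.comp_continuousOn
        (ha_cont.mono (fun x hx => ⟨hx.1.le, hx.2.le⟩))
    · intro x hx
      exact ne_of_gt (Real.sqrt_pos.2 (ha_pos x ⟨hx.1, hx.2.le⟩))
  have hf_meas : AEStronglyMeasurable (fun x => 1 / Real.sqrt (a x))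
      (volume.restrict (Ioo (0:ℝ) 1)) :=
    hf_cont.aestronglyMeasurable measurableSet_Ioo
  have hf_int : IntegrableOn (fun x => 1 / Real.sqrt (a x)) (Ioo (0:ℝ) 1) volume := by
    apply hg_int.mono' hf_meas
    filter_upwards [ae_restrict_mem measurableSet_Ioo] with x hx
    rw [Real.norm_of_nonneg (by positivity)]
    exact hbound x hx
  refine ⟨hf_int, ?_⟩
  have hmono : ∫ x in Ioo (0:ℝ) 1, 1 / Real.sqrt (a x) ≤ ∫ x in Ioo (0:ℝ) 1, g x :=
    setIntegral_mono_on hf_int hg_int measurableSet_Ioo hbound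
  have hgval : ∫ x in Ioo (0:ℝ) 1, g x = 2 / (Real.sqrt (a 1) * (2 - K)) := by
    have hri : ∫ x in Ioo (0:ℝ) 1, (x : ℝ) ^ (-(K/2)) = 2 / (2 - K) := by
      rw [← integral_Ioc_eq_integral_Ioo,
        ← intervalIntegral.integral_of_le (zero_le_one)]
      rw [integral_rpow (Or.inl (by linarith : (-1:ℝ) < -(K/2)))]
      rw [Real.one_rpow, Real.zero_rpow (by linarith : -(K/2) + 1 ≠ 0)]
      field_simp
      ring
    rw [hg]
    rw [integral_const_mul, hri]
    have h2K : (2:ℝ) - K ≠ 0 := by linarith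
    have hsne : Real.sqrt (a 1) ≠ 0 := ne_of_gt hs1
    field_simp
  linarith [hmono, hgval.le, hgval.ge]
end

section
/- Let a : [0,1] → ℝ be continuous on [0,1], continuously differentiable on (0,1], with a(x) > 0 for all x ∈ (0,1], a(0) = 0, and suppose there exists K with 0 ≤ K < 2 such that x·(deriv a)(x) ≤ K·a(x) for all x ∈ (0,1]. Then the function τ ↦ τ/a(τ) is Lebesgue integrable on (0,1), and for every x ∈ [0,1] one has ∫₀ˣ τ/a(τ) dτ ≤ 1/(a(1)·(2−K)). -/
open Set MeasureTheory

/-- If `x * a'(x) ≤ K * a(x)` on `(0,1]` with `0 ≤ K < 2`, then `τ ↦ τ / a τ`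
is Lebesgue integrable on `(0,1)` and `∫₀ˣ τ/a(τ) dτ ≤ 1/(a 1 * (2 - K))`
for every `x ∈ [0,1]`. -/
theorem id_div_a_integrable
    (a : ℝ → ℝ) (K : ℝ)
    (ha_cont : ContinuousOn a (Icc 0 1))
    (ha_diff : ∀ x ∈ Ioc (0:ℝ) 1, DifferentiableAt ℝ a x)
    (ha_deriv_cont : ContinuousOn (deriv a) (Ioc 0 1))
    (ha_pos : ∀ x ∈ Ioc (0:ℝ) 1, 0 < a x)
    (ha0 : a 0 = 0)
    (hK0 : 0 ≤ K) (hK2 : K < 2)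
    (hdeg : ∀ x ∈ Ioc (0:ℝ) 1, x * deriv a x ≤ K * a x) :
    IntegrableOn (fun τ => τ / a τ) (Ioo 0 1) volume ∧
      ∀ x ∈ Icc (0:ℝ) 1, (∫ τ in (0:ℝ)..x, τ / a τ) ≤ 1 / (a 1 * (2 - K)) := by
  have ha1 : 0 < a 1 := ha_pos 1 ⟨one_pos, le_rfl⟩
  have h2K : (0:ℝ) < 2 - K := by linarith
  have haIoc : ContinuousOn a (Ioc 0 1) := ha_cont.mono Ioc_subset_Icc_self
  -- g x = a x * x ^ (-K) is antitone on (0,1]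
  set g : ℝ → ℝ := fun x => a x * x ^ (-K) with hg
  have hg_hasDeriv : ∀ x ∈ Ioo (0:ℝ) 1, HasDerivAt g
      (deriv a x * x ^ (-K) + a x * (-K * x ^ (-K - 1))) x := by
    intro x hx
    exact ((ha_diff x ⟨hx.1, hx.2.le⟩).hasDerivAt).mul
      (Real.hasDerivAt_rpow_const (Or.inl (ne_of_gt hx.1)))
  have hg_anti : AntitoneOn g (Ioc 0 1) := by
    apply antitoneOn_of_deriv_nonpos (convex_Ioc 0 1)
    · exact haIoc.mul (continuousOn_id.rpow_const fun x hx => Or.inl (ne_of_gt hx.1))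
    · rw [interior_Ioc]
      exact fun x hx => (hg_hasDeriv x hx).differentiableAt.differentiableWithinAt
    · rw [interior_Ioc]
      intro x hx
      rw [(hg_hasDeriv x hx).deriv]
      have hx0 : (0:ℝ) < x := hx.1
      have hx1 : x ^ (-K) = x ^ (-K - 1) * x := by
        rw [show (-K) = (-K - 1) + 1 by ring, Real.rpow_add hx0, Real.rpow_one]; ring_nf
      have ht : (0:ℝ) < x ^ (-K - 1) := Real.rpow_pos_of_pos hx0 _
      have hd := hdeg x ⟨hx0, hx.2.le⟩
      rw [hx1]
      nlinarith [mul_le_mul_of_nonneg_left hd ht.le]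
  -- lower bound: a 1 * x ^ K ≤ a x on (0,1]
  have hlow : ∀ x ∈ Ioc (0:ℝ) 1, a 1 * x ^ K ≤ a x := by
    intro x hx
    have := hg_anti hx ⟨one_pos, le_rfl⟩ hx.2
    simp only [hg, Real.one_rpow, mul_one] at this
    have hxK : (0:ℝ) < x ^ K := Real.rpow_pos_of_pos hx.1 _
    have hinv : x ^ (-K) * x ^ K = 1 := by
      rw [← Real.rpow_add hx.1]; simp
    calc a 1 * x ^ K ≤ a x * x ^ (-K) * x ^ K :=
          mul_le_mul_of_nonneg_right this hxK.le
      _ = a x := by rw [mul_assoc, hinv, mul_one]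
  -- pointwise comparison on (0,1]
  have hcmp : ∀ τ ∈ Ioc (0:ℝ) 1, τ / a τ ≤ τ ^ (1 - K) / a 1 := by
    intro τ hτ
    have hτ0 : (0:ℝ) < τ := hτ.1
    have hτK : (0:ℝ) < τ ^ K := Real.rpow_pos_of_pos hτ0 _
    have haτ : 0 < a τ := ha_pos τ hτ
    have h1 : τ / a τ ≤ τ / (a 1 * τ ^ K) :=
      div_le_div_of_nonneg_left hτ0.le (mul_pos ha1 hτK) (hlow τ hτ)
    have h2 : τ / (a 1 * τ ^ K) = τ ^ (1 - K) / a 1 := by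
      rw [Real.rpow_sub hτ0, Real.rpow_one, div_div, mul_comm (τ ^ K) (a 1)]
    linarith [h1, h2.ge, h2.le]
  -- the comparison function is integrable
  have hKr : (-1:ℝ) < 1 - K := by linarith
  have hcomp_int : ∀ x ∈ Icc (0:ℝ) 1,
      IntervalIntegrable (fun τ => τ ^ (1 - K) / a 1) volume 0 x := by
    intro x _
    exact (intervalIntegral.intervalIntegrable_rpow' hKr).div_const _
  have hcomp1 : IntegrableOn (fun τ => τ ^ (1 - K) / a 1) (Ioc 0 1) volume :=
    (intervalIntegrable_iff_integrableOn_Ioc_of_le zero_le_one).1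
      (hcomp_int 1 ⟨zero_le_one, le_rfl⟩)
  -- continuity of τ / a τ on (0,1]
  have hcontf : ContinuousOn (fun τ => τ / a τ) (Ioc 0 1) :=
    continuousOn_id.div haIoc fun τ hτ => (ha_pos τ hτ).ne'
  -- integrability on Ioc 0 1
  have hmain : IntegrableOn (fun τ => τ / a τ) (Ioc 0 1) volume := by
    apply hcomp1.mono' (hcontf.aestronglyMeasurable measurableSet_Ioc)
    rw [ae_restrict_iff' measurableSet_Ioc]
    refine ae_of_all _ fun τ hτ => ?_
    have : 0 ≤ τ / a τ := div_nonneg hτ.1.le (ha_pos τ hτ).le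
    rw [Real.norm_of_nonneg this]
    exact hcmp τ hτ
  refine ⟨hmain.mono_set Ioo_subset_Ioc_self, fun x hx => ?_⟩
  have hintf : IntervalIntegrable (fun τ => τ / a τ) volume 0 x :=
    (intervalIntegrable_iff_integrableOn_Ioc_of_le hx.1).2
      (hmain.mono_set (Ioc_subset_Ioc le_rfl hx.2))
  have hmono : (∫ τ in (0:ℝ)..x, τ / a τ) ≤ ∫ τ in (0:ℝ)..x, τ ^ (1 - K) / a 1 := by
    apply intervalIntegral.integral_mono_on hx.1 hintf (hcomp_int x hx)
    intro τ hτ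
    rcases eq_or_lt_of_le hτ.1 with h0 | h0
    · rw [← h0, ha0]
      simp only [div_zero]
      positivity
    · exact hcmp τ ⟨h0, hτ.2.trans hx.2⟩
  have hval : (∫ τ in (0:ℝ)..x, τ ^ (1 - K) / a 1) = x ^ (2 - K) / (2 - K) / a 1 := by
    rw [intervalIntegral.integral_div, integral_rpow (Or.inl hKr)]
    rw [Real.zero_rpow (by intro h; linarith [h] : (1:ℝ) - K + 1 ≠ 0)]
    have h12 : (1:ℝ) - K + 1 = 2 - K := by ring
    rw [h12]; norm_num
  have hx1 : x ^ (2 - K) ≤ 1 := Real.rpow_le_one hx.1 hx.2 h2K.le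
  calc (∫ τ in (0:ℝ)..x, τ / a τ) ≤ x ^ (2 - K) / (2 - K) / a 1 := by rw [← hval]; exact hmono
    _ ≤ 1 / (2 - K) / a 1 := by gcongr
    _ = 1 / (a 1 * (2 - K)) := by rw [div_div, mul_comm]
end

section
/- Let a : [0,1] → ℝ be continuous on [0,1], continuously differentiable on (0,1], with a(x) > 0 for all x ∈ (0,1], a(0) = 0, and suppose there exists K with 0 ≤ K < 2 such that x·(deriv a)(x) ≤ K·a(x) for all x ∈ (0,1]. Let c₁ > 0 and c₂ > 1/(a(1)·(2−K)), and define ψ(x) = c₁·(c₂ − ∫₀ˣ τ/a(τ) dτ). Then ψ(x) > 0 for every x ∈ [0,1]. -/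
open Set MeasureTheory

/-- If `x * a'(x) ≤ K * a(x)` on `(0,1]` with `0 ≤ K < 2`, `c₁ > 0` and
`c₂ > 1/(a 1 * (2 - K))`, then the Carleman weight
`ψ(x) = c₁ * (c₂ - ∫₀ˣ τ/a(τ) dτ)` is positive on `[0,1]`. -/
theorem psi_pos
    (a : ℝ → ℝ) (K c₁ c₂ : ℝ) (ψ : ℝ → ℝ)
    (ha_cont : ContinuousOn a (Icc 0 1))
    (ha_diff : ∀ x ∈ Ioc (0:ℝ) 1, DifferentiableAt ℝ a x)
    (ha_deriv_cont : ContinuousOn (deriv a) (Ioc 0 1))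
    (ha_pos : ∀ x ∈ Ioc (0:ℝ) 1, 0 < a x)
    (ha0 : a 0 = 0)
    (hK0 : 0 ≤ K) (hK2 : K < 2)
    (hdeg : ∀ x ∈ Ioc (0:ℝ) 1, x * deriv a x ≤ K * a x)
    (hc₁ : 0 < c₁) (hc₂ : 1 / (a 1 * (2 - K)) < c₂)
    (hψ : ∀ x, ψ x = c₁ * (c₂ - ∫ τ in (0:ℝ)..x, τ / a τ)) :
    ∀ x ∈ Icc (0:ℝ) 1, 0 < ψ x := by
  have ha1 : 0 < a 1 := ha_pos 1 ⟨one_pos, le_rfl⟩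
  have h2K : 0 < 2 - K := by linarith
  -- Step 1: `a 1 * x ^ K ≤ a x` on `(0,1]`.
  have key : ∀ x ∈ Ioc (0:ℝ) 1, a 1 * x ^ K ≤ a x := by
    intro x hx
    set h : ℝ → ℝ := fun t => a t * t ^ (-K) with hh
    have hanti : AntitoneOn h (Icc x 1) := by
      apply antitoneOn_of_deriv_nonpos (convex_Icc x 1)
      · apply ContinuousOn.mul
        · exact ha_cont.mono (Icc_subset_Icc (le_of_lt hx.1) le_rfl)
        · intro t ht
          exact (Real.continuousAt_rpow_const t (-K)
            (Or.inl (by dsimp; linarith [ht.1, hx.1]))).continuousWithinAt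
      · rw [interior_Icc]
        intro t ht
        have ht1 : t ∈ Ioc (0:ℝ) 1 := ⟨lt_trans hx.1 ht.1, le_of_lt ht.2⟩
        exact ((ha_diff t ht1).mul ((Real.hasDerivAt_rpow_const
          (Or.inl (ne_of_gt ht1.1))).differentiableAt)).differentiableWithinAt
      · rw [interior_Icc]
        intro t ht
        have ht1 : t ∈ Ioc (0:ℝ) 1 := ⟨lt_trans hx.1 ht.1, le_of_lt ht.2⟩
        have htpos := ht1.1
        have hda : HasDerivAt (fun t : ℝ => t ^ (-K)) (-K * t ^ (-K - 1)) t :=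
          Real.hasDerivAt_rpow_const (Or.inl (ne_of_gt htpos))
        have hdh : HasDerivAt h (deriv a t * t ^ (-K) + a t * (-K * t ^ (-K - 1))) t :=
          ((ha_diff t ht1).hasDerivAt).mul hda
        rw [hdh.deriv]
        have h1 : t ^ (-K) = t * t ^ (-K - 1) := by
          rw [show -K = 1 + (-K - 1) by ring, Real.rpow_add htpos, Real.rpow_one]; ring_nf
        have keyeq : deriv a t * t ^ (-K) + a t * (-K * t ^ (-K - 1))
            = t ^ (-K - 1) * (t * deriv a t - K * a t) := by rw [h1]; ring
        rw [keyeq]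
        have hd := hdeg t ht1
        have hp : 0 ≤ t ^ (-K - 1) := Real.rpow_nonneg (le_of_lt htpos) _
        nlinarith
    have hmono := hanti (Set.left_mem_Icc.2 hx.2) (Set.right_mem_Icc.2 hx.2) hx.2
    simp only [hh, Real.one_rpow, mul_one] at hmono
    have hxK : 0 < x ^ K := Real.rpow_pos_of_pos hx.1 K
    have hxK' : x ^ (-K) * x ^ K = 1 := by
      rw [← Real.rpow_add hx.1]; simp
    calc a 1 * x ^ K ≤ (a x * x ^ (-K)) * x ^ K := by nlinarith
      _ = a x := by rw [mul_assoc, hxK', mul_one]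
  -- Step 2: bound the integral.
  intro x hx
  set g : ℝ → ℝ := fun τ => τ ^ (1 - K) / a 1 with hg
  have hgint : IntervalIntegrable g volume 0 x :=
    (intervalIntegral.intervalIntegrable_rpow' (by linarith : (-1:ℝ) < 1 - K)).div_const (a 1)
  have hfb : ∀ τ ∈ Icc (0:ℝ) x, τ / a τ ≤ g τ := by
    intro τ hτ
    rcases eq_or_lt_of_le hτ.1 with h0 | h0
    · rw [← h0]
      simp only [hg, ha0, div_zero, zero_div]
      positivity
    · have hτ1 : τ ∈ Ioc (0:ℝ) 1 := ⟨h0, le_trans hτ.2 hx.2⟩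
      have haτ : 0 < a τ := ha_pos τ hτ1
      have hk := key τ hτ1
      have hτK : 0 < τ ^ K := Real.rpow_pos_of_pos h0 K
      have h1 : τ / a τ ≤ τ / (a 1 * τ ^ K) :=
        div_le_div_of_nonneg_left (le_of_lt h0) (by positivity) hk
      refine h1.trans (le_of_eq ?_)
      rw [hg]
      dsimp only
      rw [Real.rpow_sub h0, Real.rpow_one]
      field_simp
  have hfm : ContinuousOn (fun τ => τ / a τ) (Ioc 0 x) := by
    apply ContinuousOn.div continuousOn_id
      (ha_cont.mono (fun t ht => ⟨le_of_lt ht.1, le_trans ht.2 hx.2⟩))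
    intro t ht
    exact ne_of_gt (ha_pos t ⟨ht.1, le_trans ht.2 hx.2⟩)
  have hfint : IntervalIntegrable (fun τ => τ / a τ) volume 0 x := by
    rw [intervalIntegrable_iff_integrableOn_Ioc_of_le hx.1]
    apply MeasureTheory.Integrable.mono'
      ((intervalIntegrable_iff_integrableOn_Ioc_of_le hx.1).mp hgint)
      (hfm.aestronglyMeasurable measurableSet_Ioc)
    rw [ae_restrict_iff' measurableSet_Ioc]
    filter_upwards with τ hτ
    have haτ : 0 < a τ := ha_pos τ ⟨hτ.1, le_trans hτ.2 hx.2⟩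
    rw [Real.norm_eq_abs, abs_of_nonneg (div_nonneg (le_of_lt hτ.1) (le_of_lt haτ))]
    exact hfb τ ⟨le_of_lt hτ.1, hτ.2⟩
  have hI : (∫ τ in (0:ℝ)..x, τ / a τ) ≤ ∫ τ in (0:ℝ)..x, g τ :=
    intervalIntegral.integral_mono_on hx.1 hfint hgint hfb
  have hIg : (∫ τ in (0:ℝ)..x, g τ) ≤ 1 / (a 1 * (2 - K)) := by
    have : (∫ τ in (0:ℝ)..x, g τ) = (∫ τ in (0:ℝ)..x, τ ^ (1 - K)) / a 1 := by
      simp only [hg]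
      exact intervalIntegral.integral_div _ _
    rw [this, integral_rpow (Or.inl (by linarith))]
    rw [Real.zero_rpow (by norm_num; linarith : (1:ℝ) - K + 1 ≠ 0)]
    have hx1 : x ^ (1 - K + 1) ≤ 1 :=
      Real.rpow_le_one hx.1 hx.2 (by linarith)
    rw [show (1:ℝ) - K + 1 = 2 - K by ring] at hx1 ⊢
    rw [div_div, one_div, mul_comm (2 - K) (a 1), ← one_div]
    apply div_le_div_of_nonneg_right ?_ (by positivity) |>.trans
    · exact le_refl _
    · linarith
  rw [hψ x]
  have : (∫ τ in (0:ℝ)..x, τ / a τ) < c₂ := lt_of_le_of_lt (hI.trans hIg) hc₂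
  nlinarith
end

section
/- Let a : [0,1] → ℝ be continuous on [0,1], continuously differentiable on (0,1], with a(x) > 0 for all x ∈ (0,1], a(0) = 0, and suppose there exists K with 0 ≤ K < 1 such that x·(deriv a)(x) ≤ K·a(x) for all x ∈ (0,1] (so that 1/a is integrable on (0,1)). Let v : [0,1] → ℝ be absolutely continuous on [0,1] with v(1) = 0 and suppose the function x ↦ a(x)·(v'(x))² is Lebesgue integrable on (0,1). Then for every x ∈ (0,1], v(x)² ≤ (∫ₓ¹ 1/a(τ) dτ)·(∫ₓ¹ a(τ)·v'(τ)² dτ), and consequently ∫₀¹ v(x)² dx ≤ (∫₀¹ 1/a(x) dx)·(∫₀¹ a(x)·v'(x)² dx). -/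
open Set MeasureTheory

private lemma sq_rpow_half {X : ℝ} (hX : 0 ≤ X) : (X ^ ((1:ℝ)/2)) ^ 2 = X := by
  rw [← Real.rpow_natCast (X ^ ((1:ℝ)/2)) 2, ← Real.rpow_mul hX]
  norm_num

/-- Hardy–Poincaré type inequality: under the weak degeneracy condition
(`0 ≤ K < 1`), for an absolutely continuous `v` on `[0,1]` with derivative
`v'`, `v 1 = 0` and `a * v'²` integrable on `(0,1)`, one has
`v(x)² ≤ (∫ₓ¹ 1/a)(∫ₓ¹ a v'²)` on `(0,1]` and hence
`∫₀¹ v² ≤ (∫₀¹ 1/a)(∫₀¹ a v'²)`. -/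
theorem weighted_poincare
    (a v v' : ℝ → ℝ) (K : ℝ)
    (ha_cont : ContinuousOn a (Icc 0 1))
    (ha_diff : ∀ x ∈ Ioc (0:ℝ) 1, DifferentiableAt ℝ a x)
    (ha_deriv_cont : ContinuousOn (deriv a) (Ioc 0 1))
    (ha_pos : ∀ x ∈ Ioc (0:ℝ) 1, 0 < a x)
    (ha0 : a 0 = 0)
    (hK0 : 0 ≤ K) (hK1 : K < 1)
    (hdeg : ∀ x ∈ Ioc (0:ℝ) 1, x * deriv a x ≤ K * a x)
    (hv'int : IntegrableOn v' (Icc 0 1) volume)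
    (hFTC : ∀ x ∈ Icc (0:ℝ) 1, v 1 - v x = ∫ t in x..(1:ℝ), v' t)
    (hv1 : v 1 = 0)
    (hav' : IntegrableOn (fun x => a x * v' x ^ 2) (Ioo 0 1) volume) :
    (∀ x ∈ Ioc (0:ℝ) 1,
        v x ^ 2 ≤ (∫ τ in Ioc x 1, 1 / a τ) * ∫ τ in Ioc x 1, a τ * v' τ ^ 2) ∧
      ∫ x in Ioo (0:ℝ) 1, v x ^ 2 ≤
        (∫ x in Ioo (0:ℝ) 1, 1 / a x) * ∫ x in Ioo (0:ℝ) 1, a x * v' x ^ 2 := by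
  have ha1 : 0 < a 1 := ha_pos 1 ⟨one_pos, le_refl 1⟩
  -- Step 1: lower bound `a 1 * x ^ K ≤ a x` on `(0,1]`.
  set F : ℝ → ℝ := fun t => a t * t ^ (-K) with hFdef
  have hFderiv : ∀ t ∈ Ioo (0:ℝ) 1,
      HasDerivAt F (deriv a t * t ^ (-K) + a t * (-K * t ^ (-K - 1))) t := by
    intro t ht
    exact ((ha_diff t ⟨ht.1, ht.2.le⟩).hasDerivAt).mul
      (Real.hasDerivAt_rpow_const (Or.inl (ne_of_gt ht.1)))
  have hFanti : AntitoneOn F (Ioc 0 1) := by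
    apply antitoneOn_of_deriv_nonpos (convex_Ioc 0 1)
    · exact (ha_cont.mono Ioc_subset_Icc_self).mul
        (ContinuousOn.rpow_const continuousOn_id (fun t ht => Or.inl (ne_of_gt ht.1)))
    · intro t ht
      rw [interior_Ioc] at ht
      exact (hFderiv t ht).differentiableAt.differentiableWithinAt
    · intro t ht
      rw [interior_Ioc] at ht
      have ht0 : (0:ℝ) < t := ht.1
      rw [(hFderiv t ht).deriv]
      have hP : (0:ℝ) < t ^ (-K - 1) := Real.rpow_pos_of_pos ht0 _
      have key : t * t ^ (-K - 1) = t ^ (-K) := by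
        rw [Real.rpow_sub ht0 (-K) 1, Real.rpow_one]
        field_simp
      have hd := hdeg t ⟨ht0, ht.2.le⟩
      have h2 : (K * a t - t * deriv a t) * t ^ (-K - 1) ≥ 0 :=
        mul_nonneg (by linarith) hP.le
      rw [← key]
      nlinarith [h2]
  have hlb : ∀ x ∈ Ioc (0:ℝ) 1, a 1 * x ^ K ≤ a x := by
    intro x hx
    have h := hFanti hx ⟨one_pos, le_refl 1⟩ hx.2
    simp only [hFdef, Real.one_rpow, mul_one] at h
    have hxK : (0:ℝ) < x ^ K := Real.rpow_pos_of_pos hx.1 K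
    calc a 1 * x ^ K ≤ (a x * x ^ (-K)) * x ^ K := by nlinarith
      _ = a x := by
          rw [mul_assoc, ← Real.rpow_add hx.1]
          simp
  -- Step 2: integrability of `1/a` on `(0,1)`.
  have hinv_cont : ContinuousOn (fun t => 1 / a t) (Ioo 0 1) :=
    ContinuousOn.div continuousOn_const
      (ha_cont.mono (fun t ht => ⟨ht.1.le, ht.2.le⟩))
      (fun t ht => (ha_pos t ⟨ht.1, ht.2.le⟩).ne')
  have hrpow_int : IntegrableOn (fun t : ℝ => t ^ (-K)) (Ioo 0 1) volume := by
    have h := intervalIntegral.intervalIntegrable_rpow' (by linarith : (-1:ℝ) < -K)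
      (a := 0) (b := 1)
    rwa [intervalIntegrable_iff_integrableOn_Ioo_of_le (by norm_num : (0:ℝ) ≤ 1)] at h
  have hinv_int : IntegrableOn (fun t => 1 / a t) (Ioo 0 1) volume := by
    apply Integrable.mono' (hrpow_int.const_mul (a 1)⁻¹)
      (hinv_cont.aestronglyMeasurable measurableSet_Ioo)
    rw [ae_restrict_iff' measurableSet_Ioo]
    filter_upwards with t ht
    have hat := ha_pos t ⟨ht.1, ht.2.le⟩
    have hlbt := hlb t ⟨ht.1, ht.2.le⟩
    have hxK : (0:ℝ) < t ^ K := Real.rpow_pos_of_pos ht.1 K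
    rw [Real.norm_eq_abs, abs_of_nonneg (by positivity), Real.rpow_neg ht.1.le,
      one_div, ← mul_inv]
    exact inv_anti₀ (by positivity) hlbt
  -- Step 3: pointwise Cauchy–Schwarz estimate.
  have key : ∀ x ∈ Ioc (0:ℝ) 1,
      v x ^ 2 ≤ (∫ τ in Ioc x 1, 1 / a τ) * ∫ τ in Ioc x 1, a τ * v' τ ^ 2 := by
    intro x hx
    obtain ⟨hx0, hx1⟩ := hx
    have hsub : Ioc x 1 ⊆ Ioc (0:ℝ) 1 := Ioc_subset_Ioc hx0.le le_rfl
    have hIccsub : Icc x 1 ⊆ Ioc (0:ℝ) 1 := fun t ht => ⟨lt_of_lt_of_le hx0 ht.1, ht.2⟩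
    have hvx : v x = -∫ t in Ioc x 1, v' t := by
      have h := hFTC x ⟨hx0.le, hx1⟩
      rw [hv1, zero_sub, intervalIntegral.integral_of_le hx1] at h
      linarith
    -- integrabilities on `Ioc x 1`
    have hinv_contx : ContinuousOn (fun t => 1 / a t) (Icc x 1) :=
      ContinuousOn.div continuousOn_const
        (ha_cont.mono (Icc_subset_Icc hx0.le le_rfl))
        (fun t ht => (ha_pos t (hIccsub ht)).ne')
    have hinvx : IntegrableOn (fun t => 1 / a t) (Ioc x 1) volume :=
      (hinv_contx.integrableOn_Icc).mono_set Ioc_subset_Icc_self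
    have havx : IntegrableOn (fun t => a t * v' t ^ 2) (Ioc x 1) volume := by
      rw [integrableOn_Ioc_iff_integrableOn_Ioo]
      exact hav'.mono_set (Ioo_subset_Ioo hx0.le le_rfl)
    have hv'x : IntegrableOn v' (Ioc x 1) volume :=
      hv'int.mono_set (fun t ht => ⟨hx0.le.trans ht.1.le, ht.2⟩)
    have hI1 : 0 ≤ ∫ τ in Ioc x 1, 1 / a τ :=
      setIntegral_nonneg measurableSet_Ioc
        (fun t ht => by have := ha_pos t (hsub ht); positivity)
    have hI2 : 0 ≤ ∫ τ in Ioc x 1, a τ * v' τ ^ 2 :=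
      setIntegral_nonneg measurableSet_Ioc
        (fun t ht => by have := ha_pos t (hsub ht); positivity)
    -- Cauchy–Schwarz with `f = √(1/a)`, `g = √a * |v'|`.
    set f : ℝ → ℝ := fun t => Real.sqrt (1 / a t) with hfdef
    set g : ℝ → ℝ := fun t => Real.sqrt (a t) * |v' t| with hgdef
    have hfm : AEStronglyMeasurable f (volume.restrict (Ioc x 1)) :=
      ((Real.continuous_sqrt.comp_continuousOn
        (hinv_contx.mono Ioc_subset_Icc_self)).aestronglyMeasurable measurableSet_Ioc)
    have hgm : AEStronglyMeasurable g (volume.restrict (Ioc x 1)) := by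
      apply AEStronglyMeasurable.mul
      · exact (Real.continuous_sqrt.comp_continuousOn
          ((ha_cont.mono (Icc_subset_Icc hx0.le le_rfl)).mono
            Ioc_subset_Icc_self)).aestronglyMeasurable measurableSet_Ioc
      · exact hv'x.aestronglyMeasurable.norm.congr
          (Filter.Eventually.of_forall fun t => Real.norm_eq_abs _)
    have hf2 : Integrable (fun t => f t ^ 2) (volume.restrict (Ioc x 1)) := by
      apply hinvx.congr
      rw [Filter.EventuallyEq, ae_restrict_iff' measurableSet_Ioc]
      filter_upwards with t ht
      have := ha_pos t (hsub ht)
      rw [hfdef]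
      exact (Real.sq_sqrt (by positivity)).symm
    have hg2 : Integrable (fun t => g t ^ 2) (volume.restrict (Ioc x 1)) := by
      apply havx.congr
      rw [Filter.EventuallyEq, ae_restrict_iff' measurableSet_Ioc]
      filter_upwards with t ht
      have hat := ha_pos t (hsub ht)
      rw [hgdef]
      simp only [mul_pow, sq_abs]
      rw [Real.sq_sqrt hat.le]
    have hfL2 : MemLp f (ENNReal.ofReal 2) (volume.restrict (Ioc x 1)) := by
      rw [show ENNReal.ofReal 2 = 2 by norm_num]
      exact (memLp_two_iff_integrable_sq hfm).2 hf2
    have hgL2 : MemLp g (ENNReal.ofReal 2) (volume.restrict (Ioc x 1)) := by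
      rw [show ENNReal.ofReal 2 = 2 by norm_num]
      exact (memLp_two_iff_integrable_sq hgm).2 hg2
    have hconj : Real.HolderConjugate 2 2 := ⟨by norm_num, by norm_num, by norm_num⟩
    have hCS := integral_mul_le_Lp_mul_Lq_of_nonneg hconj
      (Filter.Eventually.of_forall fun t => Real.sqrt_nonneg _)
      (Filter.Eventually.of_forall fun t =>
        mul_nonneg (Real.sqrt_nonneg _) (abs_nonneg _))
      hfL2 hgL2
    -- rewrite the three integrals in hCS
    have e1 : ∫ t in Ioc x 1, f t * g t = ∫ t in Ioc x 1, |v' t| := by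
      apply setIntegral_congr_fun measurableSet_Ioc
      intro t ht
      have hat := ha_pos t (hsub ht)
      simp only [hfdef, hgdef]
      rw [← mul_assoc, ← Real.sqrt_mul (by positivity), one_div,
        inv_mul_cancel₀ hat.ne', Real.sqrt_one, one_mul]
    have e2 : ∫ t in Ioc x 1, f t ^ (2:ℝ) = ∫ τ in Ioc x 1, 1 / a τ := by
      apply setIntegral_congr_fun measurableSet_Ioc
      intro t ht
      have := ha_pos t (hsub ht)
      show f t ^ (2:ℝ) = 1 / a t
      rw [show ((2:ℝ)) = ((2:ℕ):ℝ) by norm_num, Real.rpow_natCast, hfdef]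
      exact Real.sq_sqrt (by positivity)
    have e3 : ∫ t in Ioc x 1, g t ^ (2:ℝ) = ∫ τ in Ioc x 1, a τ * v' τ ^ 2 := by
      apply setIntegral_congr_fun measurableSet_Ioc
      intro t ht
      have hat := ha_pos t (hsub ht)
      show g t ^ (2:ℝ) = a t * v' t ^ 2
      rw [show ((2:ℝ)) = ((2:ℕ):ℝ) by norm_num, Real.rpow_natCast, hgdef]
      simp only [mul_pow, sq_abs]
      rw [Real.sq_sqrt hat.le]
    rw [e1, e2, e3] at hCS
    have habs : |∫ t in Ioc x 1, v' t| ≤ ∫ t in Ioc x 1, |v' t| := by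
      simpa [Real.norm_eq_abs] using
        norm_integral_le_integral_norm (μ := volume.restrict (Ioc x 1)) v'
    have habs_nonneg : (0:ℝ) ≤ ∫ t in Ioc x 1, |v' t| :=
      le_trans (abs_nonneg _) habs
    calc v x ^ 2 = |∫ t in Ioc x 1, v' t| ^ 2 := by rw [hvx]; rw [sq_abs]; ring
      _ ≤ (∫ t in Ioc x 1, |v' t|) ^ 2 := by
          exact pow_le_pow_left₀ (abs_nonneg _) habs 2
      _ ≤ ((∫ τ in Ioc x 1, 1 / a τ) ^ ((1:ℝ)/2) *
            (∫ τ in Ioc x 1, a τ * v' τ ^ 2) ^ ((1:ℝ)/2)) ^ 2 := by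
          apply pow_le_pow_left₀ habs_nonneg hCS
      _ = (∫ τ in Ioc x 1, 1 / a τ) * ∫ τ in Ioc x 1, a τ * v' τ ^ 2 := by
          rw [mul_pow, sq_rpow_half hI1, sq_rpow_half hI2]
  refine ⟨key, ?_⟩
  -- Step 4: integrate the pointwise bound.
  have hC1 : 0 ≤ ∫ x in Ioo (0:ℝ) 1, 1 / a x :=
    setIntegral_nonneg measurableSet_Ioo
      (fun t ht => by have := ha_pos t ⟨ht.1, ht.2.le⟩; positivity)
  have hC2 : 0 ≤ ∫ x in Ioo (0:ℝ) 1, a x * v' x ^ 2 :=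
    setIntegral_nonneg measurableSet_Ioo
      (fun t ht => by have := ha_pos t ⟨ht.1, ht.2.le⟩; positivity)
  have haes : ∀ x : ℝ, 0 < x → (Ioc x 1 : Set ℝ) ≤ᵐ[volume] Ioo (0:ℝ) 1 := by
    intro x hx0
    rw [ae_le_set]
    refine measure_mono_null ?_ (measure_singleton (1:ℝ))
    intro t ht
    simp only [mem_diff, mem_Ioc, mem_Ioo, not_and, not_lt] at ht
    have h1 : t = 1 := le_antisymm ht.1.2 (ht.2 (lt_of_lt_of_le hx0 ht.1.1.le))
    simp [h1]
  have hmono1 : ∀ x : ℝ, 0 < x →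
      ∫ τ in Ioc x 1, 1 / a τ ≤ ∫ x in Ioo (0:ℝ) 1, 1 / a x := by
    intro x hx0
    apply setIntegral_mono_set hinv_int ?_ (haes x hx0)
    rw [Filter.EventuallyLE, ae_restrict_iff' measurableSet_Ioo]
    filter_upwards with t ht
    have := ha_pos t ⟨ht.1, ht.2.le⟩
    positivity
  have hmono2 : ∀ x : ℝ, 0 < x →
      ∫ τ in Ioc x 1, a τ * v' τ ^ 2 ≤ ∫ x in Ioo (0:ℝ) 1, a x * v' x ^ 2 := by
    intro x hx0
    apply setIntegral_mono_set hav' ?_ (haes x hx0)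
    rw [Filter.EventuallyLE, ae_restrict_iff' measurableSet_Ioo]
    filter_upwards with t ht
    have := ha_pos t ⟨ht.1, ht.2.le⟩
    positivity
  have hbound : ∀ x ∈ Ioo (0:ℝ) 1, v x ^ 2 ≤
      (∫ x in Ioo (0:ℝ) 1, 1 / a x) * ∫ x in Ioo (0:ℝ) 1, a x * v' x ^ 2 := by
    intro x hx
    have hx' : x ∈ Ioc (0:ℝ) 1 := ⟨hx.1, hx.2.le⟩
    have hI1 : 0 ≤ ∫ τ in Ioc x 1, 1 / a τ :=
      setIntegral_nonneg measurableSet_Ioc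
        (fun t ht => by
          have := ha_pos t ⟨lt_trans hx.1 ht.1, ht.2⟩; positivity)
    have hI2 : 0 ≤ ∫ τ in Ioc x 1, a τ * v' τ ^ 2 :=
      setIntegral_nonneg measurableSet_Ioc
        (fun t ht => by
          have := ha_pos t ⟨lt_trans hx.1 ht.1, ht.2⟩; positivity)
    calc v x ^ 2 ≤ (∫ τ in Ioc x 1, 1 / a τ) * ∫ τ in Ioc x 1, a τ * v' τ ^ 2 :=
          key x hx'
      _ ≤ (∫ x in Ioo (0:ℝ) 1, 1 / a x) * ∫ x in Ioo (0:ℝ) 1, a x * v' x ^ 2 :=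
          mul_le_mul (hmono1 x hx.1) (hmono2 x hx.1) hI2 (le_trans hI1 (hmono1 x hx.1))
  -- measurability of `v` on `(0,1)`
  have hvcont : ContinuousOn v (Icc 0 1) := by
    have hprim : ContinuousOn (fun x => ∫ t in x..(1:ℝ), v' t) (Icc 0 1) := by
      have := intervalIntegral.continuousOn_primitive_interval_left
        (a := (0:ℝ)) (b := (1:ℝ)) (f := v') (μ := volume)
        (by rwa [uIcc_of_le (by norm_num : (0:ℝ) ≤ 1)])
      rwa [uIcc_of_le (by norm_num : (0:ℝ) ≤ 1)] at this
    apply (hprim.neg).congr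
    intro x hx
    have h := hFTC x hx
    rw [hv1, zero_sub] at h
    simpa using congrArg Neg.neg h
  have hv2int : IntegrableOn (fun x => v x ^ 2) (Ioo 0 1) volume := by
    apply Integrable.mono'
      (integrable_const ((∫ x in Ioo (0:ℝ) 1, 1 / a x) *
        ∫ x in Ioo (0:ℝ) 1, a x * v' x ^ 2))
      (((hvcont.mono (fun t ht => ⟨ht.1.le, ht.2.le⟩)).pow 2).aestronglyMeasurable
        measurableSet_Ioo)
    rw [ae_restrict_iff' measurableSet_Ioo]
    filter_upwards with t ht
    rw [Real.norm_eq_abs, abs_of_nonneg (sq_nonneg _)]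
    exact hbound t ht
  calc ∫ x in Ioo (0:ℝ) 1, v x ^ 2
      ≤ ∫ _x in Ioo (0:ℝ) 1, ((∫ x in Ioo (0:ℝ) 1, 1 / a x) *
          ∫ x in Ioo (0:ℝ) 1, a x * v' x ^ 2) := by
        apply setIntegral_mono_on hv2int (integrable_const _) measurableSet_Ioo hbound
    _ = (∫ x in Ioo (0:ℝ) 1, 1 / a x) * ∫ x in Ioo (0:ℝ) 1, a x * v' x ^ 2 := by
        rw [setIntegral_const]
        simp [Real.volume_Ioo]
end
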